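/- Tensor moment comparison: let V be a finite-dimensional inner product space, w_1,…,w_k ∈ ℝ, and v_1,…,v_k ∈ V with ‖v_i‖ ≤ 1. Define M_t = Σ_{i=1}^k w_i v_i^{⊗t} ∈ V^{⊗t}. Then for every t ≥ k, ‖M_t‖_2 ≤ binom(t, k−1)·(2k)^k · max_{0 ≤ s < k} ‖M_s‖_2, where ‖·‖_2 is the norm induced on V^{⊗t} by the inner product of V. -/

import Mathlib

open RealInnerProductSpace

namespace TMC
open Finset

/-- Complete homogeneous symmetric function of degree `c` in the entries of the list. -/
def hp : List ℝ → ℕ → ℝ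
  | [], c => if c = 0 then 1 else 0
  | (y :: S), c => ∑ p ∈ Finset.HasAntidiagonal.antidiagonal c, y ^ p.1 * hp S p.2

lemma hp_nil (c : ℕ) : hp [] c = if c = 0 then 1 else 0 := by simp [hp]

lemma hp_cons (y : ℝ) (S : List ℝ) (c : ℕ) :
    hp (y :: S) c = ∑ p ∈ Finset.HasAntidiagonal.antidiagonal c, y ^ p.1 * hp S p.2 := by simp [hp]

lemma hp_zero (S : List ℝ) : hp S 0 = 1 := by
  induction S with
  | nil => rfl
  | cons y S ih => rw [hp_cons, Finset.Nat.antidiagonal_zero]; simp [ih]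

lemma hp_cons_succ (y : ℝ) (S : List ℝ) (c : ℕ) :
    hp (y :: S) (c + 1) = hp S (c + 1) + y * hp (y :: S) c := by
  rw [hp_cons, Finset.Nat.sum_antidiagonal_succ, hp_cons, Finset.mul_sum]
  simp [pow_succ, mul_assoc, mul_comm, mul_left_comm]

lemma hp_cons_congr (z : ℝ) (A B : List ℝ) (c : ℕ) (h : ∀ b, hp A b = hp B b) :
    hp (z :: A) c = hp (z :: B) c := by
  rw [hp_cons, hp_cons]
  exact Finset.sum_congr rfl fun p _ => by rw [h]

lemma hp_diff (z y : ℝ) (S : List ℝ) : ∀ c : ℕ,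
    hp (z :: S) (c + 1) - hp (y :: S) (c + 1) = (z - y) * hp (z :: y :: S) c := by
  intro c
  induction c with
  | zero =>
      rw [hp_cons_succ, hp_cons_succ, hp_zero, hp_zero, hp_zero]
      ring
  | succ c ih =>
      rw [hp_cons_succ z S (c + 1), hp_cons_succ y S (c + 1),
        hp_cons_succ z (y :: S) c]
      linear_combination z * ih

/-- Triangle-swap for double antidiagonal sums. -/
lemma antidiagonal_sum_comm (c : ℕ) (G : ℕ → ℕ → ℕ → ℝ) :
    ∑ p ∈ Finset.HasAntidiagonal.antidiagonal c, ∑ q ∈ Finset.HasAntidiagonal.antidiagonal p.2, G p.1 q.1 q.2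
      = ∑ p ∈ Finset.HasAntidiagonal.antidiagonal c, ∑ q ∈ Finset.HasAntidiagonal.antidiagonal p.2, G q.1 p.1 q.2 := by
  rw [Finset.sum_sigma', Finset.sum_sigma']
  refine Finset.sum_nbij' (fun x => ⟨(x.2.1, x.1.1 + x.2.2), (x.1.1, x.2.2)⟩)
    (fun x => ⟨(x.2.1, x.1.1 + x.2.2), (x.1.1, x.2.2)⟩) ?_ ?_ ?_ ?_ ?_
  · rintro ⟨⟨p1, p2⟩, ⟨q1, q2⟩⟩ h
    simp only [Finset.mem_sigma, Finset.HasAntidiagonal.mem_antidiagonal] at h ⊢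
    exact ⟨by omega, trivial⟩
  · rintro ⟨⟨p1, p2⟩, ⟨q1, q2⟩⟩ h
    simp only [Finset.mem_sigma, Finset.HasAntidiagonal.mem_antidiagonal] at h ⊢
    exact ⟨by omega, trivial⟩
  · rintro ⟨⟨p1, p2⟩, ⟨q1, q2⟩⟩ h
    simp only [Finset.mem_sigma, Finset.HasAntidiagonal.mem_antidiagonal] at h
    have h2 : q1 + q2 = p2 := h.2
    subst h2
    rfl
  · rintro ⟨⟨p1, p2⟩, ⟨q1, q2⟩⟩ h
    simp only [Finset.mem_sigma, Finset.HasAntidiagonal.mem_antidiagonal] at h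
    have h2 : q1 + q2 = p2 := h.2
    subst h2
    rfl
  · rintro ⟨p, q⟩ _
    rfl

lemma hp_middle (y : ℝ) : ∀ (S : List ℝ) (c : ℕ), hp (y :: S) c = hp (S ++ [y]) c := by
  intro S
  induction S with
  | nil => intro c; simp [hp]
  | cons z S ih =>
      intro c
      have rhs : hp ((z :: S) ++ [y]) c
          = ∑ p ∈ Finset.HasAntidiagonal.antidiagonal c, z ^ p.1 * hp (y :: S) p.2 := by
        rw [List.cons_append, hp_cons]
        exact Finset.sum_congr rfl fun p _ => by rw [← ih]
      rw [rhs, hp_cons]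
      have lhs : ∑ p ∈ Finset.HasAntidiagonal.antidiagonal c, y ^ p.1 * hp (z :: S) p.2
          = ∑ p ∈ Finset.HasAntidiagonal.antidiagonal c, ∑ q ∈ Finset.HasAntidiagonal.antidiagonal p.2,
              (y ^ p.1 * z ^ q.1) * hp S q.2 := by
        refine Finset.sum_congr rfl fun p _ => ?_
        rw [hp_cons, Finset.mul_sum]
        exact Finset.sum_congr rfl fun q _ => by ring
      have rhs2 : ∑ p ∈ Finset.HasAntidiagonal.antidiagonal c, z ^ p.1 * hp (y :: S) p.2
          = ∑ p ∈ Finset.HasAntidiagonal.antidiagonal c, ∑ q ∈ Finset.HasAntidiagonal.antidiagonal p.2,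
              (y ^ q.1 * z ^ p.1) * hp S q.2 := by
        refine Finset.sum_congr rfl fun p _ => ?_
        rw [hp_cons, Finset.mul_sum]
        exact Finset.sum_congr rfl fun q _ => by ring
      rw [lhs, rhs2]
      exact antidiagonal_sum_comm c (fun a e f => (y ^ a * z ^ e) * hp S f)

lemma hp_singleton (z : ℝ) (n : ℕ) : hp [z] n = z ^ n := by
  rw [hp_cons]
  rw [Finset.sum_eq_single (n, 0)]
  · simp [hp_nil]
  · rintro ⟨a, b⟩ hb hne
    simp only [Finset.HasAntidiagonal.mem_antidiagonal] at hb
    have hbne : b ≠ 0 := by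
      intro h
      apply hne
      subst h
      simp only [Nat.add_zero] at hb
      subst hb
      rfl
    simp [hp_nil, hbne]
  · intro h
    exact absurd (by simp [Finset.HasAntidiagonal.mem_antidiagonal]) h


/-- Newton-form expansion of a power against a list of interpolation nodes. -/
lemma newton (n : ℕ) (z : ℝ) : ∀ L : List ℝ, L.length ≤ n →
    z ^ n = (∑ s ∈ Finset.range L.length,
        hp (L.take (s + 1)) (n - s) * ((L.take s).map (fun u => z - u)).prod)
      + ((L.map (fun u => z - u)).prod) * hp (z :: L) (n - L.length) := by
  intro L
  induction L using List.reverseRecOn with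
  | nil => simp [hp_singleton]
  | append_singleton L Y ih =>
      intro hlen
      simp only [List.length_append, List.length_singleton] at hlen
      simp only [List.length_append, List.length_singleton]
      have hL : L.length ≤ n := by omega
      obtain ⟨c, hc⟩ : ∃ c, n - L.length = c + 1 := ⟨n - L.length - 1, by omega⟩
      rw [Finset.sum_range_succ]
      have htake1 : ∀ s : ℕ, s ≤ L.length → (L ++ [Y]).take s = L.take s := by
        intro s hs
        rw [List.take_append_of_le_length hs]
      have hsum : ∑ s ∈ Finset.range L.length,
            hp ((L ++ [Y]).take (s + 1)) (n - s) * (((L ++ [Y]).take s).map (fun u => z - u)).prod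
          = ∑ s ∈ Finset.range L.length,
            hp (L.take (s + 1)) (n - s) * ((L.take s).map (fun u => z - u)).prod := by
        refine Finset.sum_congr rfl fun s hs => ?_
        rw [Finset.mem_range] at hs
        rw [htake1 (s + 1) (by omega), htake1 s (by omega)]
      rw [hsum]
      have htakeL : (L ++ [Y]).take L.length = L := by
        rw [htake1 L.length le_rfl, List.take_length]
      have htakeL1 : (L ++ [Y]).take (L.length + 1) = L ++ [Y] := by
        have hlen2 : L.length + 1 = (L ++ [Y]).length := by simp
        rw [hlen2, List.take_length]
      rw [htakeL, htakeL1]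
      have hprod : ((L ++ [Y]).map fun u => z - u).prod
          = ((L.map fun u => z - u).prod) * (z - Y) := by
        rw [List.map_append, List.prod_append]; simp
      rw [hprod]
      have key : hp (z :: L) (n - L.length)
          = hp (L ++ [Y]) (n - L.length) + (z - Y) * hp (z :: (L ++ [Y])) (n - (L.length + 1)) := by
        have h1 : n - (L.length + 1) = c := by omega
        rw [hc, h1]
        have h2 : hp (z :: (L ++ [Y])) c = hp (z :: Y :: L) c := by
          refine hp_cons_congr z _ _ c fun b => ?_
          rw [← hp_middle]
        rw [h2, ← hp_middle]
        have := hp_diff z Y L c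
        linarith
      rw [ih hL, key]
      ring

/-- Number of monomials of degree `c` in `p` variables. -/
def cnt : ℕ → ℕ → ℕ
  | 0, c => if c = 0 then 1 else 0
  | (p + 1), c => ∑ q ∈ Finset.HasAntidiagonal.antidiagonal c, cnt p q.2

lemma cnt_zero (c : ℕ) : cnt 0 c = if c = 0 then 1 else 0 := by simp [cnt]

lemma cnt_succ (p c : ℕ) : cnt (p + 1) c = ∑ q ∈ Finset.HasAntidiagonal.antidiagonal c, cnt p q.2 := by
  simp [cnt]

lemma hockey (p : ℕ) : ∀ c : ℕ, ∑ i ∈ Finset.range (c + 1), (i + p).choose p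
    = (c + p + 1).choose (p + 1) := by
  intro c
  induction c with
  | zero => simp
  | succ c ih =>
      rw [Finset.sum_range_succ, ih]
      have : c + 1 + p + 1 = (c + p + 1) + 1 := by omega
      rw [this, Nat.choose_succ_succ (c + p + 1) p]
      have e : c + 1 + p = c + p + 1 := by omega
      rw [e]
      simp [Nat.succ_eq_add_one]
      omega

lemma cnt_eq_choose (p : ℕ) : ∀ c : ℕ, cnt (p + 1) c = (c + p).choose p := by
  induction p with
  | zero =>
      intro c
      rw [cnt_succ, Finset.Nat.sum_antidiagonal_eq_sum_range_succ_mk]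
      simp only [cnt_zero]
      rw [Finset.sum_eq_single c]
      · simp
      · intro b hb hne
        rw [Finset.mem_range] at hb
        have : c - b ≠ 0 := by omega
        simp [this]
      · intro h
        exact absurd (Finset.self_mem_range_succ c) h
  | succ p ih =>
      intro c
      rw [cnt_succ, Finset.Nat.sum_antidiagonal_eq_sum_range_succ_mk]
      have h1 : ∀ i ∈ Finset.range (c + 1), cnt (p + 1) (c - i) = ((c - i) + p).choose p :=
        fun i _ => ih (c - i)
      rw [Finset.sum_congr rfl h1]
      have h2 : ∑ i ∈ Finset.range (c + 1), ((c - i) + p).choose p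
          = ∑ i ∈ Finset.range (c + 1), ((i + p).choose p) := by
        rw [← Finset.sum_range_reflect]
        refine Finset.sum_congr rfl fun i hi => ?_
        rw [Finset.mem_range] at hi
        congr 2
        omega
      rw [h2, hockey]
      have e : c + (p + 1) = c + p + 1 := by omega
      rw [e]


variable {k d : ℕ}

/-- Abstract inner product of atoms `i` and `j` given coordinates `c`. -/
def Xf (c : Fin k → Fin d → ℝ) (i j : Fin k) : ℝ := ∑ p, c i p * c j p

/-- `Ff w c m = ‖M_m‖₂²` in coordinates. -/
def Ff (w : Fin k → ℝ) (c : Fin k → Fin d → ℝ) (m : ℕ) : ℝ :=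
  ∑ i, ∑ j, w i * w j * (Xf c i j) ^ m

lemma sum_prod_fun (m : ℕ) (θ : Fin m → Fin d → ℝ) :
    ∑ g : Fin m → Fin d, ∏ u, θ u (g u) = ∏ u, ∑ p, θ u p := (Fintype.prod_sum θ).symm

lemma Xf_pow (c : Fin k → Fin d → ℝ) (i j : Fin k) (m : ℕ) :
    (Xf c i j) ^ m = ∑ g : Fin m → Fin d, (∏ u, c i (g u)) * (∏ u, c j (g u)) := by
  rw [Xf, Fintype.sum_pow]
  exact Finset.sum_congr rfl fun g _ => by rw [← Finset.prod_mul_distrib]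

lemma Ff_eq (w : Fin k → ℝ) (c : Fin k → Fin d → ℝ) (m : ℕ) :
    Ff w c m = ∑ g : Fin m → Fin d, (∑ j, w j * ∏ u, c j (g u)) ^ 2 := by
  have expand : ∀ g : Fin m → Fin d, (∑ j, w j * ∏ u, c j (g u)) ^ 2
      = ∑ i, ∑ j, (w i * ∏ u, c i (g u)) * (w j * ∏ u, c j (g u)) := by
    intro g
    rw [sq, Finset.sum_mul_sum]
  calc Ff w c m
      = ∑ i, ∑ j, ∑ g : Fin m → Fin d,
          (w i * ∏ u, c i (g u)) * (w j * ∏ u, c j (g u)) := by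
        refine Finset.sum_congr rfl fun i _ => Finset.sum_congr rfl fun j _ => ?_
        rw [Xf_pow, Finset.mul_sum]
        exact Finset.sum_congr rfl fun g _ => by ring
    _ = ∑ i, ∑ g : Fin m → Fin d, ∑ j,
          (w i * ∏ u, c i (g u)) * (w j * ∏ u, c j (g u)) := by
        exact Finset.sum_congr rfl fun i _ => Finset.sum_comm
    _ = ∑ g : Fin m → Fin d, ∑ i, ∑ j,
          (w i * ∏ u, c i (g u)) * (w j * ∏ u, c j (g u)) := Finset.sum_comm
    _ = ∑ g : Fin m → Fin d, (∑ j, w j * ∏ u, c j (g u)) ^ 2 := by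
        exact Finset.sum_congr rfl fun g _ => (expand g).symm

lemma Ff_nonneg (w : Fin k → ℝ) (c : Fin k → Fin d → ℝ) (m : ℕ) : 0 ≤ Ff w c m := by
  rw [Ff_eq]
  exact Finset.sum_nonneg fun g _ => sq_nonneg _

lemma sum_sum_factor {ι κ : Type*} [Fintype ι] [Fintype κ] (x : ℝ) (f : ι → ℝ) (g : κ → ℝ) :
    ∑ a : ι, ∑ b : κ, x * (f a * g b) = x * ((∑ a : ι, f a) * (∑ b : κ, g b)) := by
  rw [Finset.sum_mul_sum, Finset.mul_sum]
  refine Finset.sum_congr rfl fun a _ => ?_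
  rw [Finset.mul_sum]

lemma cs_base_fn (w : Fin k → ℝ) (c : Fin k → Fin d → ℝ) (hc : ∀ i, ∑ p, (c i p) ^ 2 ≤ 1)
    (a m : ℕ) (E : Fin m → Fin k) :
    |∑ j, w j * (∏ u, Xf c (E u) j) * (∑ i, w i * Xf c i j ^ a)|
      ≤ Real.sqrt (Ff w c a) * Real.sqrt (Ff w c (a + m)) := by
  classical
  set P : Fin k → (Fin a → Fin d) → ℝ := fun j g => ∏ u, c j (g u) with hP
  set Q : Fin k → (Fin m → Fin d) → ℝ := fun j h => ∏ u, c j (h u) with hQ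
  set R : (Fin m → Fin d) → ℝ := fun h => ∏ u, c (E u) (h u) with hR
  set A : (Fin a → Fin d) → ℝ := fun g => ∑ i, w i * P i g with hA
  set T : (Fin a → Fin d) → (Fin m → Fin d) → ℝ := fun g h => ∑ j, w j * P j g * Q j h with hT
  have lemB : ∀ i j : Fin k, ∑ g : Fin a → Fin d, P i g * P j g = Xf c i j ^ a := by
    intro i j
    rw [Xf_pow]
  have lemQ : ∀ j j' : Fin k, ∑ h : Fin m → Fin d, Q j h * Q j' h = Xf c j j' ^ m := by
    intro j j'
    rw [Xf_pow]
  have lemA : ∀ j : Fin k, ∑ h : Fin m → Fin d, R h * Q j h = ∏ u, Xf c (E u) j := by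
    intro j
    calc ∑ h : Fin m → Fin d, R h * Q j h
        = ∑ h : Fin m → Fin d, ∏ u, (c (E u) (h u) * c j (h u)) := by
          refine Finset.sum_congr rfl fun h _ => ?_
          rw [hR, hQ, ← Finset.prod_mul_distrib]
      _ = ∏ u, ∑ p, c (E u) p * c j p := sum_prod_fun m (fun u p => c (E u) p * c j p)
      _ = ∏ u, Xf c (E u) j := rfl
  have lemAg : ∀ j : Fin k, ∑ g : Fin a → Fin d, A g * P j g = ∑ i, w i * Xf c i j ^ a := by
    intro j
    calc ∑ g : Fin a → Fin d, A g * P j g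
        = ∑ g : Fin a → Fin d, ∑ i, w i * (P i g * P j g) := by
          refine Finset.sum_congr rfl fun g _ => ?_
          rw [hA, Finset.sum_mul]
          exact Finset.sum_congr rfl fun i _ => by ring
      _ = ∑ i, ∑ g : Fin a → Fin d, w i * (P i g * P j g) := Finset.sum_comm
      _ = ∑ i, w i * Xf c i j ^ a := by
          refine Finset.sum_congr rfl fun i _ => ?_
          rw [← Finset.mul_sum, lemB]
  -- (1) pairing identity
  have key1 : ∑ g : Fin a → Fin d, ∑ h : Fin m → Fin d, (A g * R h) * T g h
      = ∑ j, w j * (∏ u, Xf c (E u) j) * (∑ i, w i * Xf c i j ^ a) := by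
    calc ∑ g : Fin a → Fin d, ∑ h : Fin m → Fin d, (A g * R h) * T g h
        = ∑ g : Fin a → Fin d, ∑ h : Fin m → Fin d, ∑ j,
            w j * ((A g * P j g) * (R h * Q j h)) := by
          refine Finset.sum_congr rfl fun g _ => Finset.sum_congr rfl fun h _ => ?_
          rw [hT, Finset.mul_sum]
          exact Finset.sum_congr rfl fun j _ => by ring
      _ = ∑ g : Fin a → Fin d, ∑ j, ∑ h : Fin m → Fin d,
            w j * ((A g * P j g) * (R h * Q j h)) :=
          Finset.sum_congr rfl fun g _ => Finset.sum_comm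
      _ = ∑ j, ∑ g : Fin a → Fin d, ∑ h : Fin m → Fin d,
            w j * ((A g * P j g) * (R h * Q j h)) := Finset.sum_comm
      _ = ∑ j, ∑ g : Fin a → Fin d, ∑ h : Fin m → Fin d,
            w j * ((fun g' => A g' * P j g') g * ((fun h' => R h' * Q j h') h)) := rfl
      _ = ∑ j, w j * ((∑ g : Fin a → Fin d, A g * P j g)
            * (∑ h : Fin m → Fin d, R h * Q j h)) := by
          refine Finset.sum_congr rfl fun j _ => ?_
          rw [← sum_sum_factor (w j) (fun g => A g * P j g) (fun h => R h * Q j h)]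
      _ = ∑ j, w j * (∏ u, Xf c (E u) j) * (∑ i, w i * Xf c i j ^ a) := by
          refine Finset.sum_congr rfl fun j _ => ?_
          rw [lemAg, lemA]
          ring
  -- (2) norm of Z
  have key2 : ∑ g : Fin a → Fin d, ∑ h : Fin m → Fin d, (A g * R h) ^ 2 ≤ Ff w c a := by
    have e1 : ∑ g : Fin a → Fin d, ∑ h : Fin m → Fin d, (A g * R h) ^ 2
        = (∑ g : Fin a → Fin d, A g ^ 2) * (∑ h : Fin m → Fin d, R h ^ 2) := by
      rw [Finset.sum_mul_sum]
      exact Finset.sum_congr rfl fun g _ => Finset.sum_congr rfl fun h _ => (mul_pow _ _ 2)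
    have e2 : ∑ g : Fin a → Fin d, A g ^ 2 = Ff w c a := (Ff_eq w c a).symm
    have e3 : ∑ h : Fin m → Fin d, R h ^ 2 = ∏ u, ∑ p, (c (E u) p) ^ 2 := by
      have e31 : ∀ h : Fin m → Fin d, R h ^ 2 = ∏ u, (c (E u) (h u)) ^ 2 := by
        intro h
        rw [hR, ← Finset.prod_pow]
      rw [Finset.sum_congr rfl fun h _ => e31 h]
      exact sum_prod_fun m fun u p => (c (E u) p) ^ 2
    have e4 : ∏ u, ∑ p, (c (E u) p) ^ 2 ≤ 1 := by
      refine Finset.prod_le_one (fun u _ => ?_) (fun u _ => hc (E u))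
      exact Finset.sum_nonneg fun p _ => sq_nonneg _
    rw [e1, e2, e3]
    calc Ff w c a * ∏ u, ∑ p, (c (E u) p) ^ 2 ≤ Ff w c a * 1 :=
          mul_le_mul_of_nonneg_left e4 (Ff_nonneg w c a)
      _ = Ff w c a := mul_one _
  -- (3) norm of T
  have key3 : ∑ g : Fin a → Fin d, ∑ h : Fin m → Fin d, (T g h) ^ 2 = Ff w c (a + m) := by
    calc ∑ g : Fin a → Fin d, ∑ h : Fin m → Fin d, (T g h) ^ 2
        = ∑ g : Fin a → Fin d, ∑ h : Fin m → Fin d, ∑ j, ∑ j',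
            (w j * P j g * Q j h) * (w j' * P j' g * Q j' h) := by
          refine Finset.sum_congr rfl fun g _ => Finset.sum_congr rfl fun h _ => ?_
          rw [hT, sq, Finset.sum_mul_sum]
      _ = ∑ g : Fin a → Fin d, ∑ j, ∑ h : Fin m → Fin d, ∑ j',
            (w j * P j g * Q j h) * (w j' * P j' g * Q j' h) :=
          Finset.sum_congr rfl fun g _ => Finset.sum_comm
      _ = ∑ j, ∑ g : Fin a → Fin d, ∑ h : Fin m → Fin d, ∑ j',
            (w j * P j g * Q j h) * (w j' * P j' g * Q j' h) := Finset.sum_comm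
      _ = ∑ j, ∑ g : Fin a → Fin d, ∑ j', ∑ h : Fin m → Fin d,
            (w j * P j g * Q j h) * (w j' * P j' g * Q j' h) :=
          Finset.sum_congr rfl fun j _ => Finset.sum_congr rfl fun g _ => Finset.sum_comm
      _ = ∑ j, ∑ j', ∑ g : Fin a → Fin d, ∑ h : Fin m → Fin d,
            (w j * P j g * Q j h) * (w j' * P j' g * Q j' h) :=
          Finset.sum_congr rfl fun j _ => Finset.sum_comm
      _ = ∑ j, ∑ j', ∑ g : Fin a → Fin d, ∑ h : Fin m → Fin d,
            (w j * w j') * ((P j g * P j' g) * (Q j h * Q j' h)) := by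
          refine Finset.sum_congr rfl fun j _ => Finset.sum_congr rfl fun j' _ =>
            Finset.sum_congr rfl fun g _ => Finset.sum_congr rfl fun h _ => by ring
      _ = ∑ j, ∑ j', (w j * w j') * ((∑ g : Fin a → Fin d, P j g * P j' g)
            * (∑ h : Fin m → Fin d, Q j h * Q j' h)) := by
          refine Finset.sum_congr rfl fun j _ => Finset.sum_congr rfl fun j' _ => ?_
          rw [← sum_sum_factor (w j * w j') (fun g => P j g * P j' g)
            (fun h => Q j h * Q j' h)]
      _ = ∑ j, ∑ j', w j * w j' * Xf c j j' ^ (a + m) := by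
          refine Finset.sum_congr rfl fun j _ => Finset.sum_congr rfl fun j' _ => ?_
          rw [lemB j j', lemQ j j', ← pow_add]
      _ = Ff w c (a + m) := rfl
  -- Cauchy-Schwarz over the product index
  have hcs : (∑ g : Fin a → Fin d, ∑ h : Fin m → Fin d, (A g * R h) * T g h) ^ 2
      ≤ (∑ g : Fin a → Fin d, ∑ h : Fin m → Fin d, (A g * R h) ^ 2)
        * (∑ g : Fin a → Fin d, ∑ h : Fin m → Fin d, (T g h) ^ 2) := by
    have e1 : ∀ f : (Fin a → Fin d) → (Fin m → Fin d) → ℝ,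
        ∑ g : Fin a → Fin d, ∑ h : Fin m → Fin d, f g h
          = ∑ x : (Fin a → Fin d) × (Fin m → Fin d), f x.1 x.2 := by
      intro f
      rw [Fintype.sum_prod_type]
    rw [e1, e1, e1]
    exact Finset.sum_mul_sq_le_sq_mul_sq Finset.univ _ _
  rw [← key1]
  have hT2 : 0 ≤ ∑ g : Fin a → Fin d, ∑ h : Fin m → Fin d, (T g h) ^ 2 :=
    Finset.sum_nonneg fun g _ => Finset.sum_nonneg fun h _ => sq_nonneg _
  have hfin : (∑ g : Fin a → Fin d, ∑ h : Fin m → Fin d, (A g * R h) * T g h) ^ 2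
      ≤ Ff w c a * Ff w c (a + m) := by
    calc (∑ g : Fin a → Fin d, ∑ h : Fin m → Fin d, (A g * R h) * T g h) ^ 2
        ≤ (∑ g : Fin a → Fin d, ∑ h : Fin m → Fin d, (A g * R h) ^ 2)
          * (∑ g : Fin a → Fin d, ∑ h : Fin m → Fin d, (T g h) ^ 2) := hcs
      _ ≤ Ff w c a * (∑ g : Fin a → Fin d, ∑ h : Fin m → Fin d, (T g h) ^ 2) :=
          mul_le_mul_of_nonneg_right key2 hT2
      _ = Ff w c a * Ff w c (a + m) := by rw [key3]
  have habs := Real.sqrt_le_sqrt hfin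
  rw [Real.sqrt_sq_eq_abs] at habs
  calc |∑ g : Fin a → Fin d, ∑ h : Fin m → Fin d, (A g * R h) * T g h|
      ≤ Real.sqrt (Ff w c a * Ff w c (a + m)) := habs
    _ = Real.sqrt (Ff w c a) * Real.sqrt (Ff w c (a + m)) :=
        Real.sqrt_mul (Ff_nonneg w c a) _


lemma list_map_prod_eq {α : Type*} (E : List α) (f : α → ℝ) :
    (E.map f).prod = ∏ u : Fin E.length, f (E.get u) := by
  conv_lhs => rw [← List.ofFn_get E]
  rw [List.map_ofFn, List.prod_ofFn]
  rfl

lemma cs_base (w : Fin k → ℝ) (c : Fin k → Fin d → ℝ) (hc : ∀ i, ∑ p, (c i p) ^ 2 ≤ 1)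
    (a : ℕ) (E : List (Fin k)) :
    |∑ j, w j * ((E.map fun l => Xf c l j).prod) * (∑ i, w i * Xf c i j ^ a)|
      ≤ Real.sqrt (Ff w c a) * Real.sqrt (Ff w c (a + E.length)) := by
  have h := cs_base_fn w c hc a E.length E.get
  have e : ∀ j, (E.map fun l => Xf c l j).prod = ∏ u : Fin E.length, Xf c (E.get u) j :=
    fun j => list_map_prod_eq E _
  calc |∑ j, w j * ((E.map fun l => Xf c l j).prod) * (∑ i, w i * Xf c i j ^ a)|
      = |∑ j, w j * (∏ u : Fin E.length, Xf c (E.get u) j) * (∑ i, w i * Xf c i j ^ a)| := by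
        congr 1
        exact Finset.sum_congr rfl fun j _ => by rw [e j]
    _ ≤ Real.sqrt (Ff w c a) * Real.sqrt (Ff w c (a + E.length)) := h

lemma bkey (w : Fin k → ℝ) (c : Fin k → Fin d → ℝ) (hc : ∀ i, ∑ p, (c i p) ^ 2 ≤ 1) :
    ∀ (Lab : List (Fin k)) (cd a : ℕ) (E : List (Fin k)),
    |∑ j, w j * hp (Lab.map fun l => Xf c l j) cd * ((E.map fun l => Xf c l j).prod)
        * (∑ i, w i * Xf c i j ^ a)|
      ≤ (cnt Lab.length cd : ℝ)
          * (Real.sqrt (Ff w c a) * Real.sqrt (Ff w c (a + cd + E.length))) := by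
  intro Lab
  induction Lab with
  | nil =>
      intro cd a E
      cases cd with
      | zero =>
          have h := cs_base w c hc a E
          have e0 : ∑ j, w j * hp (List.map (fun l => Xf c l j) []) 0
                * ((E.map fun l => Xf c l j).prod) * (∑ i, w i * Xf c i j ^ a)
              = ∑ j, w j * ((E.map fun l => Xf c l j).prod) * (∑ i, w i * Xf c i j ^ a) := by
            refine Finset.sum_congr rfl fun j _ => ?_
            rw [List.map_nil, hp_nil]
            norm_num
          rw [e0]
          have e1 : (cnt ([] : List (Fin k)).length 0 : ℝ) = 1 := by
            norm_num [List.length_nil, cnt_zero]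
          rw [e1, one_mul]
          have e2 : a + 0 + E.length = a + E.length := by omega
          rw [e2]
          exact h
      | succ n =>
          simp only [List.map_nil, hp_nil, List.length_nil, cnt_zero]
          simp
  | cons l Lab ih =>
      intro cd a E
      have hexp : ∀ j, hp ((l :: Lab).map fun l' => Xf c l' j) cd
          = ∑ q ∈ Finset.HasAntidiagonal.antidiagonal cd,
              (Xf c l j) ^ q.1 * hp (Lab.map fun l' => Xf c l' j) q.2 := by
        intro j
        rw [List.map_cons, hp_cons]
      have step1 : ∑ j, w j * hp ((l :: Lab).map fun l' => Xf c l' j) cd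
            * ((E.map fun l' => Xf c l' j).prod) * (∑ i, w i * Xf c i j ^ a)
          = ∑ q ∈ Finset.HasAntidiagonal.antidiagonal cd, ∑ j,
              w j * hp (Lab.map fun l' => Xf c l' j) q.2
                * (((List.replicate q.1 l ++ E).map fun l' => Xf c l' j).prod)
                * (∑ i, w i * Xf c i j ^ a) := by
        rw [Finset.sum_comm]
        refine Finset.sum_congr rfl fun j _ => ?_
        rw [hexp j]
        have e : (w j * ∑ q ∈ Finset.HasAntidiagonal.antidiagonal cd,
              (Xf c l j) ^ q.1 * hp (Lab.map fun l' => Xf c l' j) q.2)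
              * ((E.map fun l' => Xf c l' j).prod) * (∑ i, w i * Xf c i j ^ a)
            = (∑ q ∈ Finset.HasAntidiagonal.antidiagonal cd,
              (Xf c l j) ^ q.1 * hp (Lab.map fun l' => Xf c l' j) q.2)
              * (w j * ((E.map fun l' => Xf c l' j).prod) * (∑ i, w i * Xf c i j ^ a)) := by
          ring
        rw [e, Finset.sum_mul]
        refine Finset.sum_congr rfl fun q _ => ?_
        have hrep : ((List.replicate q.1 l ++ E).map fun l' => Xf c l' j).prod
            = (Xf c l j) ^ q.1 * ((E.map fun l' => Xf c l' j).prod) := by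
          rw [List.map_append, List.prod_append, List.map_replicate, List.prod_replicate]
        rw [hrep]
        ring
      rw [step1]
      have step2 : ∀ q ∈ Finset.HasAntidiagonal.antidiagonal cd,
          |∑ j, w j * hp (Lab.map fun l' => Xf c l' j) q.2
              * (((List.replicate q.1 l ++ E).map fun l' => Xf c l' j).prod)
              * (∑ i, w i * Xf c i j ^ a)|
            ≤ (cnt Lab.length q.2 : ℝ)
                * (Real.sqrt (Ff w c a) * Real.sqrt (Ff w c (a + cd + E.length))) := by
        intro q hq
        have hlen : (List.replicate q.1 l ++ E).length = q.1 + E.length := by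
          rw [List.length_append, List.length_replicate]
        have h := ih q.2 a (List.replicate q.1 l ++ E)
        rw [hlen] at h
        have hq2 : q.1 + q.2 = cd := Finset.HasAntidiagonal.mem_antidiagonal.mp hq
        have heq : a + q.2 + (q.1 + E.length) = a + cd + E.length := by omega
        rw [heq] at h
        exact h
      calc |∑ q ∈ Finset.HasAntidiagonal.antidiagonal cd, ∑ j,
              w j * hp (Lab.map fun l' => Xf c l' j) q.2
                * (((List.replicate q.1 l ++ E).map fun l' => Xf c l' j).prod)
                * (∑ i, w i * Xf c i j ^ a)|
          ≤ ∑ q ∈ Finset.HasAntidiagonal.antidiagonal cd, |∑ j,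
              w j * hp (Lab.map fun l' => Xf c l' j) q.2
                * (((List.replicate q.1 l ++ E).map fun l' => Xf c l' j).prod)
                * (∑ i, w i * Xf c i j ^ a)| := Finset.abs_sum_le_sum_abs _ _
        _ ≤ ∑ q ∈ Finset.HasAntidiagonal.antidiagonal cd, (cnt Lab.length q.2 : ℝ)
              * (Real.sqrt (Ff w c a) * Real.sqrt (Ff w c (a + cd + E.length))) :=
            Finset.sum_le_sum step2
        _ = (cnt (l :: Lab).length cd : ℝ)
              * (Real.sqrt (Ff w c a) * Real.sqrt (Ff w c (a + cd + E.length))) := by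
            rw [← Finset.sum_mul, List.length_cons, cnt_succ]
            push_cast
            rfl


lemma sum_two_pow_le (n : ℕ) : ∑ s ∈ Finset.range n, 2 ^ s ≤ 2 ^ n := by
  induction n with
  | zero => simp
  | succ n ih =>
      rw [Finset.sum_range_succ]
      have h2 : 2 ^ (n + 1) = 2 * 2 ^ n := by rw [pow_succ]; ring
      omega

lemma choose_step (t kk s : ℕ) (hk : kk ≤ t) (hs : s + 1 ≤ kk - 1) :
    t.choose s ≤ kk * t.choose (s + 1) := by
  have h1 : t.choose (s + 1) * (s + 1) = t.choose s * (t - s) := Nat.choose_succ_right_eq t s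
  have h2 : 1 ≤ t - s := by omega
  have h3 : s + 1 ≤ kk := by omega
  calc t.choose s ≤ t.choose s * (t - s) := Nat.le_mul_of_pos_right _ (by omega)
    _ = t.choose (s + 1) * (s + 1) := h1.symm
    _ ≤ t.choose (s + 1) * kk := Nat.mul_le_mul_left _ h3
    _ = kk * t.choose (s + 1) := Nat.mul_comm _ _

lemma choose_le_pow_choose (t kk : ℕ) (hk : kk ≤ t) :
    ∀ m s, s + m = kk - 1 → t.choose s ≤ kk ^ m * t.choose (kk - 1) := by
  intro m
  induction m with
  | zero =>
      intro s hs
      have h : s = kk - 1 := by omega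
      subst h
      simp
  | succ m ihm =>
      intro s hs
      have h1 : t.choose s ≤ kk * t.choose (s + 1) := choose_step t kk s hk (by omega)
      have h2 : t.choose (s + 1) ≤ kk ^ m * t.choose (kk - 1) := ihm (s + 1) (by omega)
      calc t.choose s ≤ kk * t.choose (s + 1) := h1
        _ ≤ kk * (kk ^ m * t.choose (kk - 1)) := Nat.mul_le_mul_left _ h2
        _ = kk ^ (m + 1) * t.choose (kk - 1) := by rw [pow_succ]; ring

lemma Nbound (t kk : ℕ) (hk0 : 0 < kk) (hk : kk ≤ t) :
    ∑ s ∈ Finset.range kk, 2 ^ s * t.choose s ≤ t.choose (kk - 1) * (2 * kk) ^ kk := by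
  have h1 : ∀ s ∈ Finset.range kk,
      2 ^ s * t.choose s ≤ 2 ^ s * (kk ^ (kk - 1) * t.choose (kk - 1)) := by
    intro s hs
    rw [Finset.mem_range] at hs
    have h2 := choose_le_pow_choose t kk hk (kk - 1 - s) s (by omega)
    have h3 : kk ^ (kk - 1 - s) ≤ kk ^ (kk - 1) := Nat.pow_le_pow_right hk0 (by omega)
    exact Nat.mul_le_mul_left _
      (le_trans h2 (Nat.mul_le_mul_right _ h3))
  calc ∑ s ∈ Finset.range kk, 2 ^ s * t.choose s
      ≤ ∑ s ∈ Finset.range kk, 2 ^ s * (kk ^ (kk - 1) * t.choose (kk - 1)) :=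
        Finset.sum_le_sum h1
    _ = (∑ s ∈ Finset.range kk, 2 ^ s) * (kk ^ (kk - 1) * t.choose (kk - 1)) := by
        rw [← Finset.sum_mul]
    _ ≤ 2 ^ kk * (kk ^ (kk - 1) * t.choose (kk - 1)) :=
        Nat.mul_le_mul_right _ (sum_two_pow_le kk)
    _ ≤ 2 ^ kk * (kk ^ kk * t.choose (kk - 1)) := by
        have h4 : kk ^ (kk - 1) ≤ kk ^ kk := Nat.pow_le_pow_right hk0 (by omega)
        exact Nat.mul_le_mul_left _ (Nat.mul_le_mul_right _ h4)
    _ = t.choose (kk - 1) * (2 * kk) ^ kk := by rw [mul_pow]; ring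

lemma main_abstract (hk : 0 < k) (w : Fin k → ℝ) (c : Fin k → Fin d → ℝ)
    (hc : ∀ i, ∑ p, (c i p) ^ 2 ≤ 1) (t : ℕ) (ht : k ≤ t) (M : ℝ) (hM0 : 0 ≤ M)
    (hM : ∀ s, s < k → Real.sqrt (Ff w c s) ≤ M) :
    Real.sqrt (Ff w c t) ≤ (t.choose (k - 1) : ℝ) * (2 * (k : ℝ)) ^ k * M := by
  classical
  set Lab0 : List (Fin k) := List.finRange k with hLab0
  have hLab0len : Lab0.length = k := List.length_finRange (n := k)
  set As : ℕ → Finset (Fin k) := fun s => (Lab0.take s).toFinset with hAs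
  have hAscard : ∀ s, s < k → (As s).card = s := by
    intro s hs
    have hnod : (Lab0.take s).Nodup := (List.take_sublist s Lab0).nodup (List.nodup_finRange k)
    rw [hAs]
    rw [List.toFinset_card_of_nodup hnod, List.length_take, hLab0len]
    omega
  set Hs : ℕ → Fin k → ℝ :=
    fun s j => hp ((Lab0.take (s + 1)).map fun l => Xf c l j) (t - s) with hHs
  set G : ℕ → Finset (Fin k) → ℝ := fun s T => ∑ j, w j * Hs s j * (∏ l ∈ T, Xf c l j)
    * (∑ i, w i * Xf c i j ^ (s - T.card)) with hG
  -- Step 1: Newton expansion of each power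
  have newton_app : ∀ i j : Fin k, Xf c i j ^ t
      = ∑ s ∈ Finset.range k, Hs s j * ((Lab0.take s).map fun l => Xf c i j - Xf c l j).prod := by
    intro i j
    have hlen : (Lab0.map fun l => Xf c l j).length = k := by
      rw [List.length_map, hLab0len]
    have hn := newton t (Xf c i j) (Lab0.map fun l => Xf c l j) (by rw [hlen]; exact ht)
    have hzero : ((Lab0.map fun l => Xf c l j).map fun u => Xf c i j - u).prod = 0 := by
      apply List.prod_eq_zero
      rw [List.map_map]
      refine List.mem_map.mpr ⟨i, List.mem_finRange i, ?_⟩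
      simp
    rw [hzero, zero_mul, add_zero, hlen] at hn
    rw [hn]
    refine Finset.sum_congr rfl fun s _ => ?_
    congr 1
    · rw [hHs, ← List.map_take]
    · rw [← List.map_take, List.map_map]
      rfl
  -- Step 2: binomial expansion of the products
  have hpi : ∀ s, s < k → ∀ i j : Fin k,
      ((Lab0.take s).map fun l => Xf c i j - Xf c l j).prod
        = ∑ T ∈ (As s).powerset,
            (-1 : ℝ) ^ T.card * (∏ l ∈ T, Xf c l j) * Xf c i j ^ (s - T.card) := by
    intro s hs i j
    have hnod : (Lab0.take s).Nodup := (List.take_sublist s Lab0).nodup (List.nodup_finRange k)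
    rw [← List.prod_toFinset _ hnod]
    have e1 : ∀ l ∈ (Lab0.take s).toFinset,
        Xf c i j - Xf c l j = (fun l' => - Xf c l' j) l + (fun _ => Xf c i j) l := by
      intro l _
      ring
    rw [Finset.prod_congr rfl e1, Finset.prod_add]
    refine Finset.sum_congr rfl fun T hT => ?_
    rw [Finset.mem_powerset] at hT
    rw [Finset.prod_const]
    have hcards : ((Lab0.take s).toFinset \ T).card = s - T.card := by
      rw [Finset.card_sdiff_of_subset hT]
      have := hAscard s hs
      rw [hAs] at this
      rw [this]
    rw [hcards]
    have hneg : ∏ l ∈ T, (- Xf c l j) = (-1 : ℝ) ^ T.card * ∏ l ∈ T, Xf c l j := by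
      calc ∏ l ∈ T, (- Xf c l j) = ∏ l ∈ T, ((-1 : ℝ) * Xf c l j) := by
            refine Finset.prod_congr rfl fun l _ => by ring
        _ = (∏ _l ∈ T, (-1 : ℝ)) * ∏ l ∈ T, Xf c l j := Finset.prod_mul_distrib
        _ = (-1 : ℝ) ^ T.card * ∏ l ∈ T, Xf c l j := by rw [Finset.prod_const]
    rw [hneg]
  -- Step 3: the moment expansion
  have hFt : Ff w c t = ∑ s ∈ Finset.range k, ∑ T ∈ (As s).powerset,
      (-1 : ℝ) ^ T.card * G s T := by
    calc Ff w c t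
        = ∑ i, ∑ j, ∑ s ∈ Finset.range k,
            (w j * Hs s j) * (w i * ((Lab0.take s).map fun l => Xf c i j - Xf c l j).prod) := by
          refine Finset.sum_congr rfl fun i _ => Finset.sum_congr rfl fun j _ => ?_
          rw [newton_app i j, Finset.mul_sum]
          exact Finset.sum_congr rfl fun s _ => by ring
      _ = ∑ i, ∑ s ∈ Finset.range k, ∑ j,
            (w j * Hs s j) * (w i * ((Lab0.take s).map fun l => Xf c i j - Xf c l j).prod) :=
          Finset.sum_congr rfl fun i _ => Finset.sum_comm
      _ = ∑ s ∈ Finset.range k, ∑ i, ∑ j,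
            (w j * Hs s j) * (w i * ((Lab0.take s).map fun l => Xf c i j - Xf c l j).prod) :=
          Finset.sum_comm
      _ = ∑ s ∈ Finset.range k, ∑ j, ∑ i,
            (w j * Hs s j) * (w i * ((Lab0.take s).map fun l => Xf c i j - Xf c l j).prod) :=
          Finset.sum_congr rfl fun s _ => Finset.sum_comm
      _ = ∑ s ∈ Finset.range k, ∑ T ∈ (As s).powerset, (-1 : ℝ) ^ T.card * G s T := by
          refine Finset.sum_congr rfl fun s hs => ?_
          rw [Finset.mem_range] at hs
          calc ∑ j, ∑ i,
                (w j * Hs s j) * (w i * ((Lab0.take s).map fun l => Xf c i j - Xf c l j).prod)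
              = ∑ j, ∑ i, ∑ T ∈ (As s).powerset,
                  (w j * Hs s j) * (w i * ((-1 : ℝ) ^ T.card * (∏ l ∈ T, Xf c l j)
                    * Xf c i j ^ (s - T.card))) := by
                refine Finset.sum_congr rfl fun j _ => Finset.sum_congr rfl fun i _ => ?_
                rw [hpi s hs i j, Finset.mul_sum, Finset.mul_sum]
            _ = ∑ j, ∑ T ∈ (As s).powerset, ∑ i,
                  (w j * Hs s j) * (w i * ((-1 : ℝ) ^ T.card * (∏ l ∈ T, Xf c l j)
                    * Xf c i j ^ (s - T.card))) :=
                Finset.sum_congr rfl fun j _ => Finset.sum_comm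
            _ = ∑ T ∈ (As s).powerset, ∑ j, ∑ i,
                  (w j * Hs s j) * (w i * ((-1 : ℝ) ^ T.card * (∏ l ∈ T, Xf c l j)
                    * Xf c i j ^ (s - T.card))) := Finset.sum_comm
            _ = ∑ T ∈ (As s).powerset, (-1 : ℝ) ^ T.card * G s T := by
                refine Finset.sum_congr rfl fun T _ => ?_
                rw [hG, Finset.mul_sum]
                refine Finset.sum_congr rfl fun j _ => ?_
                rw [Finset.mul_sum, Finset.mul_sum]
                refine Finset.sum_congr rfl fun i _ => by ring
  -- Step 4: bound each `G`
  have hGbound : ∀ s, s < k → ∀ T ∈ (As s).powerset,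
      |G s T| ≤ (t.choose s : ℝ) * (M * Real.sqrt (Ff w c t)) := by
    intro s hs T hT
    rw [Finset.mem_powerset] at hT
    have hTcard : T.card ≤ s := by
      have := Finset.card_le_card hT
      rw [hAscard s hs] at this
      exact this
    have hprodT : ∀ j, (T.toList.map fun l => Xf c l j).prod = ∏ l ∈ T, Xf c l j := by
      intro j
      rw [← List.prod_toFinset _ (Finset.nodup_toList T), Finset.toList_toFinset]
    have hb := bkey w c hc (Lab0.take (s + 1)) (t - s) (s - T.card) T.toList
    have hlen1 : (Lab0.take (s + 1)).length = s + 1 := by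
      rw [List.length_take, hLab0len]
      omega
    have hlen2 : T.toList.length = T.card := Finset.length_toList T
    rw [hlen1, hlen2] at hb
    have hexp : s - T.card + (t - s) + T.card = t := by omega
    rw [hexp] at hb
    have hG2 : G s T = ∑ j, w j * hp ((Lab0.take (s + 1)).map fun l => Xf c l j) (t - s)
        * ((T.toList.map fun l => Xf c l j).prod) * (∑ i, w i * Xf c i j ^ (s - T.card)) := by
      rw [hG]
      exact Finset.sum_congr rfl fun j _ => by rw [hprodT j]
    rw [hG2]
    have hcnt : (cnt (s + 1) (t - s) : ℝ) = (t.choose s : ℝ) := by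
      have e : t - s + s = t := by omega
      rw [cnt_eq_choose, e]
    rw [hcnt] at hb
    refine le_trans hb ?_
    have h1 : Real.sqrt (Ff w c (s - T.card)) ≤ M := hM (s - T.card) (by omega)
    have h2 : Real.sqrt (Ff w c (s - T.card)) * Real.sqrt (Ff w c t)
        ≤ M * Real.sqrt (Ff w c t) :=
      mul_le_mul_of_nonneg_right h1 (Real.sqrt_nonneg _)
    exact mul_le_mul_of_nonneg_left h2 (Nat.cast_nonneg _)
  -- Step 5: combine
  set N : ℕ := ∑ s ∈ Finset.range k, 2 ^ s * t.choose s with hN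
  have hFtle : Ff w c t ≤ (N : ℝ) * (M * Real.sqrt (Ff w c t)) := by
    calc Ff w c t ≤ |Ff w c t| := le_abs_self _
      _ = |∑ s ∈ Finset.range k, ∑ T ∈ (As s).powerset, (-1 : ℝ) ^ T.card * G s T| := by
          rw [hFt]
      _ ≤ ∑ s ∈ Finset.range k, |∑ T ∈ (As s).powerset, (-1 : ℝ) ^ T.card * G s T| :=
          Finset.abs_sum_le_sum_abs _ _
      _ ≤ ∑ s ∈ Finset.range k, ∑ T ∈ (As s).powerset, |(-1 : ℝ) ^ T.card * G s T| :=
          Finset.sum_le_sum fun s _ => Finset.abs_sum_le_sum_abs _ _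
      _ ≤ ∑ s ∈ Finset.range k, ∑ T ∈ (As s).powerset,
            (t.choose s : ℝ) * (M * Real.sqrt (Ff w c t)) := by
          refine Finset.sum_le_sum fun s hs => Finset.sum_le_sum fun T hT => ?_
          rw [Finset.mem_range] at hs
          calc |(-1 : ℝ) ^ T.card * G s T| = |(-1 : ℝ) ^ T.card| * |G s T| := abs_mul _ _
            _ = |G s T| := by rw [abs_pow, abs_neg, abs_one, one_pow, one_mul]
            _ ≤ (t.choose s : ℝ) * (M * Real.sqrt (Ff w c t)) := hGbound s hs T hT
      _ = ∑ s ∈ Finset.range k,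
            ((2 ^ s * t.choose s : ℕ) : ℝ) * (M * Real.sqrt (Ff w c t)) := by
          refine Finset.sum_congr rfl fun s hs => ?_
          rw [Finset.mem_range] at hs
          rw [Finset.sum_const, Finset.card_powerset, hAscard s hs]
          push_cast
          ring
      _ = (N : ℝ) * (M * Real.sqrt (Ff w c t)) := by
          rw [hN, ← Finset.sum_mul]
          push_cast
          rfl
  have hsq : Real.sqrt (Ff w c t) * Real.sqrt (Ff w c t) = Ff w c t :=
    Real.mul_self_sqrt (Ff_nonneg w c t)
  have hroot : Real.sqrt (Ff w c t) ≤ (N : ℝ) * M := by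
    rcases eq_or_lt_of_le (Real.sqrt_nonneg (Ff w c t)) with hz | hz
    · rw [← hz]
      positivity
    · have h1 : Real.sqrt (Ff w c t) * Real.sqrt (Ff w c t)
          ≤ ((N : ℝ) * M) * Real.sqrt (Ff w c t) := by
        rw [hsq]
        calc Ff w c t ≤ (N : ℝ) * (M * Real.sqrt (Ff w c t)) := hFtle
          _ = ((N : ℝ) * M) * Real.sqrt (Ff w c t) := by ring
      exact le_of_mul_le_mul_right h1 hz
  refine le_trans hroot ?_
  have hNle : (N : ℝ) ≤ (t.choose (k - 1) : ℝ) * (2 * (k : ℝ)) ^ k := by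
    have := Nbound t k hk ht
    rw [← hN] at this
    calc (N : ℝ) ≤ ((t.choose (k - 1) * (2 * k) ^ k : ℕ) : ℝ) := Nat.cast_le.mpr this
      _ = (t.choose (k - 1) : ℝ) * (2 * (k : ℝ)) ^ k := by push_cast; ring
  exact mul_le_mul_of_nonneg_right hNle hM0

end TMC


/-- The norm `‖M_t‖₂ = ‖Σ_i w_i v_i^{⊗t}‖₂` of the `t`-th moment tensor in `V^{⊗t}`, where
`V^{⊗t}` carries the inner product induced by that of `V` (so that
`⟨v^{⊗t}, u^{⊗t}⟩ = ⟨v,u⟩^t`); by expanding, `‖M_t‖₂² = Σ_{i,j} w_i w_j ⟨v_i, v_j⟩^t`. -/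
noncomputable def momentTensorNorm {V : Type*} [NormedAddCommGroup V]
    [InnerProductSpace ℝ V] (k : ℕ) (w : Fin k → ℝ) (v : Fin k → V) (t : ℕ) : ℝ :=
  Real.sqrt (∑ i, ∑ j, w i * w j * ⟪v i, v j⟫ ^ t)

/-- Tensor moment comparison: for a finite-dimensional inner product space `V`,
`w_i ∈ ℝ`, `v_i ∈ V` with `‖v_i‖ ≤ 1`, and `M_t = Σ_i w_i v_i^{⊗t} ∈ V^{⊗t}`: for `t ≥ k`,
`‖M_t‖₂ ≤ binom(t, k−1)·(2k)^k · max_{0 ≤ s < k} ‖M_s‖₂`. -/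
theorem tensor_moment_comparison {V : Type*} [NormedAddCommGroup V] [InnerProductSpace ℝ V]
    [FiniteDimensional ℝ V] (k : ℕ) (hk : 0 < k) (w : Fin k → ℝ) (v : Fin k → V)
    (hv : ∀ i, ‖v i‖ ≤ 1) (t : ℕ) (ht : k ≤ t) :
    momentTensorNorm k w v t ≤
      (Nat.choose t (k - 1) : ℝ) * (2 * k : ℝ) ^ k *
        (Finset.range k).sup' (Finset.nonempty_range_iff.mpr hk.ne')
          (fun s => momentTensorNorm k w v s) := by
  classical
  let b := stdOrthonormalBasis ℝ V
  set c : Fin k → Fin (Module.finrank ℝ V) → ℝ := fun i p => ⟪v i, b p⟫ with hcdef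
  have hX : ∀ i j, (⟪v i, v j⟫ : ℝ) = TMC.Xf c i j := by
    intro i j
    rw [TMC.Xf, ← OrthonormalBasis.sum_inner_mul_inner b (v i) (v j)]
    refine Finset.sum_congr rfl fun p _ => ?_
    have e : (⟪b p, v j⟫ : ℝ) = ⟪v j, b p⟫ := real_inner_comm _ _
    rw [e]
  have hc : ∀ i, ∑ p, (c i p) ^ 2 ≤ 1 := by
    intro i
    have h1 : ∑ p, (c i p) ^ 2 = (⟪v i, v i⟫ : ℝ) := by
      rw [← OrthonormalBasis.sum_inner_mul_inner b (v i) (v i)]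
      refine Finset.sum_congr rfl fun p _ => ?_
      have e : (⟪b p, v i⟫ : ℝ) = ⟪v i, b p⟫ := real_inner_comm _ _
      rw [e, sq]
    rw [h1, real_inner_self_eq_norm_sq]
    have h2 := hv i
    nlinarith [norm_nonneg (v i)]
  have hmom : ∀ m, momentTensorNorm k w v m = Real.sqrt (TMC.Ff w c m) := by
    intro m
    unfold momentTensorNorm TMC.Ff
    congr 1
    exact Finset.sum_congr rfl fun i _ => Finset.sum_congr rfl fun j _ => by rw [hX i j]
  have hne := Finset.nonempty_range_iff.mpr hk.ne'
  set M := (Finset.range k).sup' hne (fun s => momentTensorNorm k w v s) with hMdef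
  have hM : ∀ s, s < k → Real.sqrt (TMC.Ff w c s) ≤ M := by
    intro s hs
    rw [← hmom s]
    exact Finset.le_sup' _ (Finset.mem_range.mpr hs)
  have hM0 : 0 ≤ M := by
    refine le_trans ?_ (Finset.le_sup' (fun s => momentTensorNorm k w v s)
      (Finset.mem_range.mpr hk))
    unfold momentTensorNorm
    exact Real.sqrt_nonneg _
  rw [hmom t]
  exact TMC.main_abstract hk w c hc t ht M hM0 hM
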